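/- For any rational γ = p/q with 0 < p ≤ q, the map sending k ∈ {0, 1, …, q−1} to the length-q production sequence (t_k(1), …, t_k(q)), where t_k(n) = ⌊n·γ + k/q⌋ − ⌊(n−1)·γ + k/q⌋, yields q sequences such that t_k(n) = t_0(n + k') for an appropriate shift; in particular, each t_k is a cyclic shift of t_0 determined by k. -/

import Mathlib

/-- Varying the fractional initial tokens k/q cyclically shifts the production
sequence: the sequence t_k generated with residual k/q coincides with a shift
of the sequence t_0 generated with zero residual. -/
theorem production_sequence_cyclic_shift (p q k : ℕ) (hp : 0 < p) (hpq : p ≤ q)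
    (hk : k < q) :
    ∃ k' : ℕ, ∀ n : ℕ, 1 ≤ n →
      ⌊(n : ℚ) * ((p : ℚ) / q) + (k : ℚ) / q⌋ -
        ⌊((n : ℚ) - 1) * ((p : ℚ) / q) + (k : ℚ) / q⌋ =
      ⌊((n : ℚ) + (k' : ℚ)) * ((p : ℚ) / q)⌋ -
        ⌊((n : ℚ) + (k' : ℚ) - 1) * ((p : ℚ) / q)⌋ := by
  have hq : 0 < q := lt_of_le_of_lt (Nat.zero_le k) hk
  set P : ℤ := (p : ℤ) with hP
  set Q : ℤ := (q : ℤ) with hQdef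
  set K : ℤ := (k : ℤ) with hK
  have hQ0 : (0 : ℤ) < Q := by rw [hQdef]; exact_mod_cast hq
  have hQne : Q ≠ 0 := hQ0.ne'
  set G : ℤ := (Int.gcd P Q : ℤ) with hG
  have hPne : P ≠ 0 := by rw [hP]; exact_mod_cast hp.ne'
  have hG0 : (0 : ℤ) < G := by
    rw [hG]
    exact_mod_cast Nat.pos_of_ne_zero
      (fun h => hPne ((Int.gcd_eq_zero_iff.mp h).1))
  have hGP : G ∣ P := Int.gcd_dvd_left P Q
  have hGQ : G ∣ Q := Int.gcd_dvd_right P Q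
  set m : ℤ := K / G with hm
  set r : ℤ := K % G with hr
  have hKdecomp : K = G * m + r := (Int.mul_ediv_add_emod K G).symm
  have hr0 : 0 ≤ r := Int.emod_nonneg K hG0.ne'
  have hrG : r < G := Int.emod_lt_of_pos K hG0
  -- Bezout
  set a : ℤ := Int.gcdA P Q with ha
  set b : ℤ := Int.gcdB P Q with hb
  have hbez : G = P * a + Q * b := Int.gcd_eq_gcd_ab P Q
  set j : ℤ := (a * m) % Q with hj
  have hj0 : 0 ≤ j := Int.emod_nonneg _ hQne
  have hQjam : Q ∣ j - a * m := by
    rw [hj, Int.emod_def]; exact ⟨-((a*m)/Q), by ring⟩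
  have hQdvd : Q ∣ P * j - G * m := by
    have : P * j - G * m = P * (j - a * m) - Q * (b * m) := by
      rw [hbez]; ring
    rw [this]
    exact dvd_sub (Dvd.dvd.mul_left hQjam P) ⟨b * m, rfl⟩
  obtain ⟨t, ht⟩ : ∃ t, P * j = G * m + Q * t := by
    obtain ⟨t, ht⟩ := hQdvd; exact ⟨t, by linarith⟩
  -- key lemma
  have keyA : ∀ c : ℤ, G ∣ c → (c + K) / Q = (c + G * m) / Q := by
    intro c hc
    have hGcm : G ∣ c + G * m := dvd_add hc ⟨m, rfl⟩
    set s : ℤ := (c + G * m) % Q with hs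
    set d : ℤ := (c + G * m) / Q with hd
    have hsd : c + G * m = Q * d + s := (Int.mul_ediv_add_emod _ Q).symm
    have hs0 : 0 ≤ s := Int.emod_nonneg _ hQne
    have hsQ : s < Q := Int.emod_lt_of_pos _ hQ0
    have hGs : G ∣ s := by
      have : s = (c + G * m) - Q * d := by omega
      rw [this]; exact dvd_sub hGcm (Dvd.dvd.mul_right hGQ d)
    have hsle : s ≤ Q - G := by
      have hdv : G ∣ Q - s := dvd_sub hGQ hGs
      have : 0 < Q - s := by omega
      have := Int.le_of_dvd this hdv
      omega
    have h1 : c + K = (s + r) + Q * d := by rw [hKdecomp]; omega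
    rw [h1, Int.add_mul_ediv_left _ d hQne,
      Int.ediv_eq_zero_of_lt (by omega) (by omega), zero_add, hd]
  refine ⟨j.toNat, ?_⟩
  intro n hn
  have hjcast : ((j.toNat : ℕ) : ℚ) = (j : ℚ) := by
    exact_mod_cast congrArg (fun z : ℤ => (z : ℚ)) (Int.toNat_of_nonneg hj0)
  set N : ℤ := (n : ℤ) with hN
  have hqQ : ((q : ℚ)) ≠ 0 := by exact_mod_cast hq.ne'
  have e1 : (n : ℚ) * ((p : ℚ) / q) + (k : ℚ) / q = ((N * P + K : ℤ) : ℚ) / (q : ℚ) := by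
    push_cast [hN, hP, hK]; field_simp
  have e2 : ((n : ℚ) - 1) * ((p : ℚ) / q) + (k : ℚ) / q = (((N - 1) * P + K : ℤ) : ℚ) / (q : ℚ) := by
    push_cast [hN, hP, hK]; field_simp
  have e3 : ((n : ℚ) + (j.toNat : ℚ)) * ((p : ℚ) / q) = (((N + j) * P : ℤ) : ℚ) / (q : ℚ) := by
    rw [hjcast]; push_cast [hN, hP]; field_simp
  have e4 : ((n : ℚ) + (j.toNat : ℚ) - 1) * ((p : ℚ) / q) = (((N + j - 1) * P : ℤ) : ℚ) / (q : ℚ) := by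
    rw [hjcast]; push_cast [hN, hP]; field_simp
  rw [e1, e2, e3, e4, Rat.floor_intCast_div_natCast, Rat.floor_intCast_div_natCast,
    Rat.floor_intCast_div_natCast, Rat.floor_intCast_div_natCast]
  have hA1 : (N * P + K) / Q = (N * P + G * m) / Q := keyA _ (Dvd.dvd.mul_left hGP N)
  have hA2 : ((N - 1) * P + K) / Q = ((N - 1) * P + G * m) / Q :=
    keyA _ (Dvd.dvd.mul_left hGP (N - 1))
  have hB1 : (N + j) * P = (N * P + G * m) + Q * t := by linear_combination ht
  have hB2 : (N + j - 1) * P = ((N - 1) * P + G * m) + Q * t := by linear_combination ht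
  rw [hA1, hA2, hB1, hB2, Int.add_mul_ediv_left _ t hQne, Int.add_mul_ediv_left _ t hQne]
  ring
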